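/- Let N_P and R_P(t), t ≥ 1, be real constants with R_P(1) ≠ N_P, and let f : ℕ → ℝ be a sequence such that Q_P(T) = N_P + Σ_{t=0}^{T−1} f(t)·(R_P(T−t) − N_P) for every T ≥ 1. For each T ≥ 1 let Q̂_P(T) be an integrable real-valued random variable with E[Q̂_P(T)] = Q_P(T). Define estimators recursively by f̂(T−1) = (Q̂_P(T) − N_P)/(R_P(1) − N_P) − Σ_{t=0}^{T−2} f̂(t)·(R_P(T−t) − N_P)/(R_P(1) − N_P). Then for every t ≥ 0, E[f̂(t)] = f(t), i.e., each f̂(t) is an unbiased estimator of f(t). -/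

import Mathlib

open MeasureTheory ProbabilityTheory

/-- Under the model `Q_P(T) = N_P + Σ_{t=0}^{T−1} f(t)·(R_P(T−t) − N_P)` for
`T ≥ 1`, with `E[Q̂_P(T)] = Q_P(T)`, the estimators defined recursively by
`f̂(T−1) = (Q̂_P(T) − N_P)/(R_P(1) − N_P) − Σ_{t=0}^{T−2} f̂(t)·(R_P(T−t) − N_P)/(R_P(1) − N_P)`
are unbiased: `E[f̂(t)] = f(t)` for every `t ≥ 0`. -/
theorem fhat_unbiased
    {Ω : Type*} [MeasureSpace Ω] [IsProbabilityMeasure (ℙ : Measure Ω)]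
    (NP : ℝ) (RP : ℕ → ℝ) (hne : RP 1 ≠ NP)
    (f QP : ℕ → ℝ)
    (hmodel : ∀ T : ℕ, 1 ≤ T →
      QP T = NP + ∑ t ∈ Finset.range T, f t * (RP (T - t) - NP))
    (Qhat : ℕ → Ω → ℝ)
    (hQint : ∀ T : ℕ, 1 ≤ T → Integrable (Qhat T))
    (hQexp : ∀ T : ℕ, 1 ≤ T → ∫ ω, Qhat T ω = QP T)
    (fhat : ℕ → Ω → ℝ)
    (hfint : ∀ t, Integrable (fhat t))
    (hrec : ∀ (k : ℕ) (ω : Ω), fhat k ω =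
      (Qhat (k + 1) ω - NP) / (RP 1 - NP)
        - ∑ t ∈ Finset.range k, fhat t ω * ((RP (k + 1 - t) - NP) / (RP 1 - NP))) :
    ∀ t : ℕ, ∫ ω, fhat t ω = f t := by
  have hne' : RP 1 - NP ≠ 0 := sub_ne_zero.mpr hne
  intro t
  induction t using Nat.strong_induction_on with
  | _ k ih =>
    have h1 : (fhat k) = fun ω => (Qhat (k + 1) ω - NP) / (RP 1 - NP)
        - ∑ t ∈ Finset.range k, fhat t ω * ((RP (k + 1 - t) - NP) / (RP 1 - NP)) :=
      funext (hrec k)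
    have hint1 : Integrable (fun ω => (Qhat (k + 1) ω - NP) / (RP 1 - NP)) := by
      exact (((hQint (k+1) (by omega)).sub (integrable_const NP)).div_const _)
    have hint2 : Integrable (fun ω =>
        ∑ t ∈ Finset.range k, fhat t ω * ((RP (k + 1 - t) - NP) / (RP 1 - NP))) := by
      apply integrable_finset_sum
      intro i _
      exact (hfint i).mul_const _
    rw [h1, integral_sub hint1 hint2, integral_finset_sum _ (fun i _ => (hfint i).mul_const _)]
    have hA : ∫ ω, (Qhat (k + 1) ω - NP) / (RP 1 - NP)
        = (QP (k+1) - NP) / (RP 1 - NP) := by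
      rw [integral_div, integral_sub (hQint (k+1) (by omega)) (integrable_const NP),
        integral_const, hQexp (k+1) (by omega)]
      simp
    have hB : ∀ i ∈ Finset.range k,
        ∫ ω, fhat i ω * ((RP (k + 1 - i) - NP) / (RP 1 - NP))
          = f i * ((RP (k + 1 - i) - NP) / (RP 1 - NP)) := by
      intro i hi
      rw [integral_mul_const, ih i (Finset.mem_range.mp hi)]
    rw [hA, Finset.sum_congr rfl hB, hmodel (k+1) (by omega), Finset.sum_range_succ]
    have : (k + 1 - k : ℕ) = 1 := by omega
    rw [this]
    have hsum : ∑ i ∈ Finset.range k, f i * ((RP (k + 1 - i) - NP) / (RP 1 - NP))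
        = (∑ i ∈ Finset.range k, f i * (RP (k + 1 - i) - NP)) / (RP 1 - NP) := by
      rw [Finset.sum_div]
      exact Finset.sum_congr rfl fun i _ => (mul_div_assoc _ _ _).symm
    rw [hsum]
    set S := ∑ i ∈ Finset.range k, f i * (RP (k + 1 - i) - NP)
    field_simp
    ring
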